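/- Let A_Y → A_D → A_X be the recollement of hearts induced by a recollement of triangulated categories and glued t-structures. Given torsion pairs (T_Y, F_Y) in A_Y and (T_X, F_X) in A_X, define T = {A ∈ A_D : ᵖi^*A ∈ T_Y, ᵖj^*A ∈ T_X} and F = {A ∈ A_D : ᵖi^!A ∈ F_Y, ᵖj^*A ∈ F_X}. Then (T, F) is a torsion pair in A_D, it is compatible with the recollement (ᵖj_!ᵖj^*(T) ⊆ T), and its restrictions are exactly (T_Y, F_Y) and (T_X, F_X) (i.e. ᵖi^*(T) = T_Y, ᵖi^!(F) = F_Y, ᵖj^*(T) = T_X, ᵖj^*(F) = F_X). -/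

import Mathlib

open CategoryTheory Limits

namespace Glueing

attribute [local instance] CategoryTheory.Limits.HasFiniteBiproducts.of_hasFiniteProducts


/-- A torsion pair `(T, F)` in an abelian category: both classes are closed under
isomorphisms, `Hom(T, F) = 0`, and every object is an extension of a torsion-free
object by a torsion object. -/
structure AbTorsionPair {A : Type*} [Category A] [Abelian A] (T F : A → Prop) : Prop where
  isoClosed_t : ∀ {X Y : A}, (X ≅ Y) → T X → T Y
  isoClosed_f : ∀ {X Y : A}, (X ≅ Y) → F X → F Y
  orthogonal : ∀ {X Y : A}, T X → F Y → ∀ f : X ⟶ Y, f = 0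
  exists_ses : ∀ M : A, ∃ (X Y : A) (f : X ⟶ M) (g : M ⟶ Y) (w : f ≫ g = 0),
    T X ∧ F Y ∧ Mono f ∧ Epi g ∧ (ShortComplex.mk f g w).Exact

variable (AY AD AX : Type*) [Category AY] [Abelian AY] [Category AD] [Abelian AD]
  [Category AX] [Abelian AX]

/-- A recollement of abelian categories `A_Y → A_D → A_X`: adjoint triples
`ᵖi^* ⊣ ᵖi_* ⊣ ᵖi^!` and `ᵖj_! ⊣ ᵖj^* ⊣ ᵖj_*`, with `ᵖi_*` fully faithful and exact,
`ᵖj^*` exact, `ᵖj^*ᵖi_* = 0`, `ᵖi^*ᵖj_! = 0`, `ᵖj^*ᵖj_! ≅ id ≅ ᵖj^*ᵖj_*`,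
`ᵖi_*(A_Y)` a Serre subcategory, and the two canonical four-term exact sequences
(encoded by exactness at the middle together with epi/mono conditions). -/
structure AbRecollement where
  piStar : AD ⥤ AY
  piLower : AY ⥤ AD
  piShriek : AD ⥤ AY
  pjLower : AX ⥤ AD
  pjStar : AD ⥤ AX
  pjUpper : AX ⥤ AD
  adj_i₁ : piStar ⊣ piLower
  adj_i₂ : piLower ⊣ piShriek
  adj_j₁ : pjLower ⊣ pjStar
  adj_j₂ : pjStar ⊣ pjUpper
  piLower_full : piLower.Full
  piLower_faithful : piLower.Faithful
  piLower_preservesFiniteLimits : PreservesFiniteLimits piLower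
  piLower_preservesFiniteColimits : PreservesFiniteColimits piLower
  pjStar_preservesFiniteLimits : PreservesFiniteLimits pjStar
  pjStar_preservesFiniteColimits : PreservesFiniteColimits pjStar
  pjStar_piLower_zero : ∀ A : AY, IsZero (pjStar.obj (piLower.obj A))
  piStar_pjLower_zero : ∀ B : AX, IsZero (piStar.obj (pjLower.obj B))
  unit_j₁_iso : IsIso adj_j₁.unit
  counit_j₂_iso : IsIso adj_j₂.counit
  serre : ∀ S : ShortComplex AD, S.ShortExact →
    (piLower.essImage S.X₂ ↔ (piLower.essImage S.X₁ ∧ piLower.essImage S.X₃))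
  epi_unit_i₁ : ∀ A : AD, Epi (adj_i₁.unit.app A)
  mono_counit_i₂ : ∀ A : AD, Mono (adj_i₂.counit.app A)
  comp_zero₁ : ∀ A : AD, adj_j₁.counit.app A ≫ adj_i₁.unit.app A = 0
  exact₁ : ∀ A : AD, (ShortComplex.mk _ _ (comp_zero₁ A)).Exact
  comp_zero₂ : ∀ A : AD, adj_i₂.counit.app A ≫ adj_j₂.unit.app A = 0
  exact₂ : ∀ A : AD, (ShortComplex.mk _ _ (comp_zero₂ A)).Exact

/-- `B` lies in the additive closure `add M`: it is a direct summand of a finite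
direct sum of copies of `M`. -/
def InAdd {A : Type*} [Category A] [Abelian A] (M B : A) : Prop :=
  letI : HasFiniteBiproducts A := HasFiniteBiproducts.of_hasFiniteProducts
  ∃ (n : ℕ) (s : B ⟶ ⨁ fun _ : Fin n => M) (r : (⨁ fun _ : Fin n => M) ⟶ B),
    s ≫ r = 𝟙 B

end Glueing

namespace GluedAux

open CategoryTheory Limits Glueing CategoryTheory.Abelian

attribute [local instance] CategoryTheory.Abelian.Pseudoelement.objectToSort
attribute [local instance] CategoryTheory.Abelian.Pseudoelement.homToFun

section TP

variable {A : Type*} [Category A] [Abelian A]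

lemma t_of_orth {T F : A → Prop} (h : AbTorsionPair T F) {Z : A}
    (H : ∀ W : A, F W → ∀ f : Z ⟶ W, f = 0) : T Z := by
  obtain ⟨X, Y, f, g, w, hT, hF, hm, he, hex⟩ := h.exists_ses Z
  have hg : g = 0 := H Y hF g
  haveI := hm
  haveI : Epi f := hex.epi_f hg
  haveI := isIso_of_mono_of_epi f
  exact h.isoClosed_t (asIso f) hT

lemma f_of_orth {T F : A → Prop} (h : AbTorsionPair T F) {Z : A}
    (H : ∀ W : A, T W → ∀ f : W ⟶ Z, f = 0) : F Z := by
  obtain ⟨X, Y, f, g, w, hT, hF, hm, he, hex⟩ := h.exists_ses Z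
  have hf : f = 0 := H X hT f
  haveI := he
  haveI : Mono g := hex.mono_g hf
  haveI := isIso_of_mono_of_epi g
  exact h.isoClosed_f (asIso g).symm hF

lemma t_of_isZero {T F : A → Prop} (h : AbTorsionPair T F) {Z : A} (hZ : IsZero Z) : T Z :=
  t_of_orth h (fun _ _ f => hZ.eq_of_src f 0)

lemma f_of_isZero {T F : A → Prop} (h : AbTorsionPair T F) {Z : A} (hZ : IsZero Z) : F Z :=
  f_of_orth h (fun _ _ f => hZ.eq_of_tgt f 0)

lemma isZero_of_epi {X Y : A} (f : X ⟶ Y) [Epi f] (h : IsZero X) : IsZero Y := by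
  rw [IsZero.iff_id_eq_zero, ← cancel_epi f, Category.comp_id, comp_zero]
  exact h.eq_of_src f 0

end TP

section Adj

variable {C D : Type*} [Category C] [Abelian C] [Category D] [Abelian D]

lemma homEquiv_zero {F : C ⥤ D} {G : D ⥤ C} (adj : F ⊣ G) [G.PreservesZeroMorphisms]
    {X : C} {Y : D} : adj.homEquiv X Y 0 = 0 := by
  rw [Adjunction.homEquiv_unit, Functor.map_zero, comp_zero]

lemma homEquiv_symm_zero {F : C ⥤ D} {G : D ⥤ C} (adj : F ⊣ G) [F.PreservesZeroMorphisms]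
    {X : C} {Y : D} : (adj.homEquiv X Y).symm 0 = 0 := by
  rw [Adjunction.homEquiv_counit, Functor.map_zero, zero_comp]

end Adj

section Rec

variable {AY AD AX : Type*} [Category AY] [Abelian AY] [Category AD] [Abelian AD]
  [Category AX] [Abelian AX]
  {TY FY : AY → Prop} {TX FX : AX → Prop}

lemma isZero_piShriek_pjUpper (R : AbRecollement AY AD AX) (H : AX) :
    IsZero (R.piShriek.obj (R.pjUpper.obj H)) := by
  haveI := R.adj_i₂.isRightAdjoint
  haveI := R.adj_j₂.isRightAdjoint
  rw [IsZero.iff_id_eq_zero]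
  have e1 := (R.adj_i₂.homEquiv (R.piShriek.obj (R.pjUpper.obj H)) (R.pjUpper.obj H)).apply_symm_apply
    (𝟙 (R.piShriek.obj (R.pjUpper.obj H)))
  rw [← e1]
  have hφ0 : (R.adj_i₂.homEquiv (R.piShriek.obj (R.pjUpper.obj H)) (R.pjUpper.obj H)).symm
      (𝟙 (R.piShriek.obj (R.pjUpper.obj H))) = 0 := by
    set φ := (R.adj_i₂.homEquiv (R.piShriek.obj (R.pjUpper.obj H)) (R.pjUpper.obj H)).symm
      (𝟙 (R.piShriek.obj (R.pjUpper.obj H))) with hφ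
    have e2 := (R.adj_j₂.homEquiv (R.piLower.obj (R.piShriek.obj (R.pjUpper.obj H))) H).apply_symm_apply φ
    rw [← e2, (R.pjStar_piLower_zero _).eq_of_src
      ((R.adj_j₂.homEquiv (R.piLower.obj (R.piShriek.obj (R.pjUpper.obj H))) H).symm φ) 0,
      homEquiv_zero]
  rw [hφ0, homEquiv_zero]

lemma mem_T_piLower (R : AbRecollement AY AD AX) (hY : AbTorsionPair TY FY)
    (hX : AbTorsionPair TX FX) {G : AY} (hG : TY G) :
    TY (R.piStar.obj (R.piLower.obj G)) ∧ TX (R.pjStar.obj (R.piLower.obj G)) := by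
  haveI := R.piLower_full
  haveI := R.piLower_faithful
  exact ⟨hY.isoClosed_t (asIso (R.adj_i₁.counit.app G)).symm hG,
    t_of_isZero hX (R.pjStar_piLower_zero G)⟩

lemma mem_F_piLower (R : AbRecollement AY AD AX) (hY : AbTorsionPair TY FY)
    (hX : AbTorsionPair TX FX) {G : AY} (hG : FY G) :
    FY (R.piShriek.obj (R.piLower.obj G)) ∧ FX (R.pjStar.obj (R.piLower.obj G)) := by
  haveI := R.piLower_full
  haveI := R.piLower_faithful
  exact ⟨hY.isoClosed_f (asIso (R.adj_i₂.unit.app G)) hG,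
    f_of_isZero hX (R.pjStar_piLower_zero G)⟩

lemma mem_T_pjLower (R : AbRecollement AY AD AX) (hY : AbTorsionPair TY FY)
    (hX : AbTorsionPair TX FX) {H : AX} (hH : TX H) :
    TY (R.piStar.obj (R.pjLower.obj H)) ∧ TX (R.pjStar.obj (R.pjLower.obj H)) := by
  haveI := R.unit_j₁_iso
  exact ⟨t_of_isZero hY (R.piStar_pjLower_zero H),
    hX.isoClosed_t (asIso (R.adj_j₁.unit.app H)) hH⟩

lemma mem_F_pjUpper (R : AbRecollement AY AD AX) (hY : AbTorsionPair TY FY)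
    (hX : AbTorsionPair TX FX) {H : AX} (hH : FX H) :
    FY (R.piShriek.obj (R.pjUpper.obj H)) ∧ FX (R.pjStar.obj (R.pjUpper.obj H)) := by
  haveI := R.counit_j₂_iso
  exact ⟨f_of_isZero hY (isZero_piShriek_pjUpper R H),
    hX.isoClosed_f (asIso (R.adj_j₂.counit.app H)).symm hH⟩

lemma orth (R : AbRecollement AY AD AX) (hY : AbTorsionPair TY FY)
    (hX : AbTorsionPair TX FX) {A B : AD}
    (hA : TY (R.piStar.obj A) ∧ TX (R.pjStar.obj A))
    (hB : FY (R.piShriek.obj B) ∧ FX (R.pjStar.obj B)) (φ : A ⟶ B) : φ = 0 := by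
  haveI := R.adj_j₂.isRightAdjoint
  haveI := R.adj_i₁.isRightAdjoint
  have hjφ : R.pjStar.map φ = 0 := hX.orthogonal hA.2 hB.2 _
  have h1 : φ ≫ R.adj_j₂.unit.app B = 0 := by
    have hn := R.adj_j₂.unit.naturality φ
    rw [Functor.id_map] at hn
    rw [hn]
    have h2 : (R.pjStar ⋙ R.pjUpper).map φ = 0 := by
      rw [Functor.comp_map, hjφ, Functor.map_zero]
    rw [h2, comp_zero]
  haveI : Mono (ShortComplex.mk _ _ (R.comp_zero₂ B)).f := R.mono_counit_i₂ B
  have hl := (R.exact₂ B).lift_f φ h1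
  have hl0 : (R.exact₂ B).lift φ h1 = 0 := by
    have e := (R.adj_i₁.homEquiv A (R.piShriek.obj B)).apply_symm_apply ((R.exact₂ B).lift φ h1)
    rw [← e, hY.orthogonal hA.1 hB.1
      ((R.adj_i₁.homEquiv A (R.piShriek.obj B)).symm ((R.exact₂ B).lift φ h1)), homEquiv_zero]
  rw [← hl, hl0, zero_comp]

end Rec

end GluedAux

section Big

open CategoryTheory Limits Glueing CategoryTheory.Abelian GluedAux

attribute [local instance] CategoryTheory.Abelian.Pseudoelement.objectToSort
attribute [local instance] CategoryTheory.Abelian.Pseudoelement.homToFun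

variable {AY AD AX : Type*} [Category AY] [Abelian AY] [Category AD] [Abelian AD]
  [Category AX] [Abelian AX]
  {TY FY : AY → Prop} {TX FX : AX → Prop}

lemma exists_ses_glued (R : AbRecollement AY AD AX) (hY : AbTorsionPair TY FY)
    (hX : AbTorsionPair TX FX) (M : AD) :
    ∃ (A B : AD) (f : A ⟶ M) (g : M ⟶ B) (w : f ≫ g = 0),
      (TY (R.piStar.obj A) ∧ TX (R.pjStar.obj A)) ∧
      (FY (R.piShriek.obj B) ∧ FX (R.pjStar.obj B)) ∧ Mono f ∧ Epi g ∧
      (ShortComplex.mk f g w).Exact := by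
  classical
  haveI := R.adj_i₁.isLeftAdjoint
  haveI := R.adj_i₁.isRightAdjoint
  haveI := R.adj_i₂.isLeftAdjoint
  haveI := R.adj_i₂.isRightAdjoint
  haveI := R.adj_j₁.isLeftAdjoint
  haveI := R.adj_j₁.isRightAdjoint
  haveI := R.adj_j₂.isLeftAdjoint
  haveI := R.adj_j₂.isRightAdjoint
  haveI := R.piLower_preservesFiniteLimits
  haveI := R.piLower_preservesFiniteColimits
  haveI := R.pjStar_preservesFiniteLimits
  haveI := R.pjStar_preservesFiniteColimits
  haveI := R.piLower_full
  haveI := R.piLower_faithful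
  haveI := R.counit_j₂_iso
  haveI : PreservesColimitsOfSize.{0, 0} R.piStar := R.adj_i₁.leftAdjoint_preservesColimits
  obtain ⟨U, V, u, v, wuv, hU, hV, hu, hv, hexX⟩ := hX.exists_ses (R.pjStar.obj M)
  haveI := hu; haveI := hv
  haveI : Mono (ShortComplex.mk u v wuv).f := hu
  let θ : M ⟶ R.pjUpper.obj V := (R.adj_j₂.homEquiv M V) v
  obtain ⟨T', F', t', q, wtq, hT', hF', ht', hq, hexY⟩ := hY.exists_ses (R.piStar.obj (kernel θ))
  haveI := ht'; haveI := hq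
  haveI : Mono (ShortComplex.mk t' q wtq).f := ht'
  haveI : Epi (R.adj_i₁.unit.app (kernel θ)) := R.epi_unit_i₁ (kernel θ)
  let ψ : kernel θ ⟶ R.piLower.obj F' := R.adj_i₁.unit.app (kernel θ) ≫ R.piLower.map q
  haveI : Epi ψ := epi_comp _ _
  haveI : Mono (kernel.ι ψ ≫ kernel.ι θ) := mono_comp _ _
  refine ⟨kernel ψ, cokernel (kernel.ι ψ ≫ kernel.ι θ), kernel.ι ψ ≫ kernel.ι θ,
    cokernel.π _, cokernel.condition _, ⟨?_, ?_⟩, ?_, inferInstance, inferInstance,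
    ShortComplex.exact_of_g_is_cokernel _ (cokernelIsCokernel _)⟩
  · -- TY (i* A)
    have hSY : ((ShortComplex.mk t' q wtq).map R.piLower).Exact :=
      hexY.map_of_mono_of_preservesKernel R.piLower ht' inferInstance
    haveI : Mono ((ShortComplex.mk t' q wtq).map R.piLower).f := by
      show Mono (R.piLower.map t')
      infer_instance
    have h0 : (kernel.ι ψ ≫ R.adj_i₁.unit.app (kernel θ)) ≫ R.piLower.map q = 0 := by
      rw [Category.assoc]
      exact kernel.condition ψ
    let α : kernel ψ ⟶ R.piLower.obj T' :=
      hSY.lift (kernel.ι ψ ≫ R.adj_i₁.unit.app (kernel θ)) h0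
    have hα : α ≫ R.piLower.map t' = kernel.ι ψ ≫ R.adj_i₁.unit.app (kernel θ) :=
      hSY.lift_f _ _
    have hSAψ : (ShortComplex.mk (kernel.ι ψ) ψ (kernel.condition ψ)).Exact :=
      ShortComplex.exact_of_f_is_kernel _ (kernelIsKernel ψ)
    have hαepi : Epi α := by
      apply Pseudoelement.epi_of_pseudo_surjective
      intro a₂
      obtain ⟨m₁, hm₁⟩ := Pseudoelement.pseudo_surjective_of_epi
        (R.adj_i₁.unit.app (kernel θ)) ((R.piLower.map t') a₂)
      have hψm : ψ m₁ = 0 := by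
        show (R.adj_i₁.unit.app (kernel θ) ≫ R.piLower.map q) m₁ = 0
        rw [Pseudoelement.comp_apply, hm₁, ← Pseudoelement.comp_apply, ← Functor.map_comp,
          wtq, Functor.map_zero]
        exact Pseudoelement.zero_apply _ _
      obtain ⟨a, ha⟩ := Pseudoelement.pseudo_exact_of_exact hSAψ m₁ hψm
      refine ⟨a, Pseudoelement.pseudo_injective_of_mono (R.piLower.map t') ?_⟩
      rw [← Pseudoelement.comp_apply, hα, Pseudoelement.comp_apply, ha, hm₁]
    haveI := hαepi
    have hκc : kernel.ι (R.adj_i₁.unit.app (kernel θ)) ≫ ψ = 0 := by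
      show kernel.ι (R.adj_i₁.unit.app (kernel θ)) ≫
        R.adj_i₁.unit.app (kernel θ) ≫ R.piLower.map q = 0
      rw [← Category.assoc, kernel.condition, zero_comp]
    let κ' : kernel (R.adj_i₁.unit.app (kernel θ)) ⟶ kernel ψ :=
      kernel.lift ψ (kernel.ι (R.adj_i₁.unit.app (kernel θ))) hκc
    have hκι : κ' ≫ kernel.ι ψ = kernel.ι (R.adj_i₁.unit.app (kernel θ)) :=
      kernel.lift_ι _ _ _
    haveI : Mono (κ' ≫ kernel.ι ψ) := by
      rw [hκι]; infer_instance
    haveI : Mono κ' := mono_of_mono κ' (kernel.ι ψ)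
    have hκα : κ' ≫ α = 0 := by
      rw [← cancel_mono (R.piLower.map t'), zero_comp, Category.assoc, hα, ← Category.assoc,
        hκι, kernel.condition]
    have hKlim : IsLimit (KernelFork.ofι κ' hκα) := by
      refine KernelFork.IsLimit.ofι' κ' hκα (fun {W'} w hw => ?_)
      have h1 : (w ≫ kernel.ι ψ) ≫ R.adj_i₁.unit.app (kernel θ) = 0 := by
        rw [Category.assoc, ← hα, ← Category.assoc, hw, zero_comp]
      refine ⟨kernel.lift _ (w ≫ kernel.ι ψ) h1, ?_⟩
      rw [← cancel_mono (kernel.ι ψ), Category.assoc, hκι, kernel.lift_ι]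
    have hcolim : IsColimit (CokernelCofork.ofπ α hκα) :=
      Abelian.epiIsCokernelOfKernel _ hKlim
    have hSK : (ShortComplex.mk κ' α hκα).Exact :=
      ShortComplex.exact_of_g_is_cokernel _ hcolim
    -- i* of kernel of the unit is zero
    let lam : R.pjLower.obj (R.pjStar.obj (kernel θ)) ⟶ kernel (R.adj_i₁.unit.app (kernel θ)) :=
      kernel.lift _ (R.adj_j₁.counit.app (kernel θ)) (R.comp_zero₁ (kernel θ))
    have hlamι : lam ≫ kernel.ι (R.adj_i₁.unit.app (kernel θ)) = R.adj_j₁.counit.app (kernel θ) :=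
      kernel.lift_ι _ _ _
    haveI : Epi lam := by
      apply Pseudoelement.epi_of_pseudo_surjective
      intro k
      have hk : (R.adj_i₁.unit.app (kernel θ)) ((kernel.ι (R.adj_i₁.unit.app (kernel θ))) k) = 0 := by
        rw [← Pseudoelement.comp_apply, kernel.condition]
        exact Pseudoelement.zero_apply _ _
      obtain ⟨x, hx⟩ := Pseudoelement.pseudo_exact_of_exact (R.exact₁ (kernel θ)) _ hk
      refine ⟨x, Pseudoelement.pseudo_injective_of_mono
        (kernel.ι (R.adj_i₁.unit.app (kernel θ))) ?_⟩
      rw [← Pseudoelement.comp_apply, hlamι]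
      exact hx
    have hZK : IsZero (R.piStar.obj (kernel (R.adj_i₁.unit.app (kernel θ)))) :=
      isZero_of_epi (R.piStar.map lam) (R.piStar_pjLower_zero _)
    have hmap : ((ShortComplex.mk κ' α hκα).map R.piStar).Exact :=
      hSK.map_of_epi_of_preservesCokernel R.piStar hαepi inferInstance
    have hf0 : ((ShortComplex.mk κ' α hκα).map R.piStar).f = 0 := hZK.eq_of_src _ _
    haveI : Mono (R.piStar.map α) := hmap.mono_g hf0
    haveI : IsIso (R.piStar.map α) := isIso_of_mono_of_epi _
    exact hY.isoClosed_t (asIso (R.piStar.map α) ≪≫ asIso (R.adj_i₁.counit.app T')).symm hT'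
  · -- TX (j* A)
    have hψ0 : R.pjStar.map ψ = 0 := (R.pjStar_piLower_zero F').eq_of_tgt _ _
    have hθv : R.pjStar.map θ ≫ R.adj_j₂.counit.app V = v := by
      have h := (R.adj_j₂.homEquiv M V).symm_apply_apply v
      rwa [Adjunction.homEquiv_counit] at h
    have hθv' : R.pjStar.map θ = v ≫ inv (R.adj_j₂.counit.app V) := by
      rw [IsIso.eq_comp_inv]
      exact hθv
    have e : U ≅ R.pjStar.obj (kernel ψ) :=
      ((PreservesKernel.iso R.pjStar ψ) ≪≫ kernelIsoOfEq hψ0 ≪≫ kernelZeroIsoSource ≪≫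
        (PreservesKernel.iso R.pjStar θ) ≪≫ kernelIsoOfEq hθv' ≪≫
        kernelCompMono v (inv (R.adj_j₂.counit.app V)) ≪≫
        (IsLimit.conePointUniqueUpToIso (limit.isLimit _) hexX.fIsKernel)).symm
    exact hX.isoClosed_t e hU
  · -- F (cokernel f)
    have h2 : (kernel.ι ψ ≫ kernel.ι θ) ≫ Abelian.coimage.π θ = 0 := by
      rw [Category.assoc, cokernel.condition, comp_zero]
    let p₂ : cokernel (kernel.ι ψ ≫ kernel.ι θ) ⟶ Abelian.coimage θ :=
      cokernel.desc _ (Abelian.coimage.π θ) h2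
    have hgp : cokernel.π (kernel.ι ψ ≫ kernel.ι θ) ≫ p₂ = Abelian.coimage.π θ :=
      cokernel.π_desc _ _ _
    have hnc : kernel.ι ψ ≫ (kernel.ι θ ≫ cokernel.π (kernel.ι ψ ≫ kernel.ι θ)) = 0 := by
      rw [← Category.assoc]
      exact cokernel.condition _
    let n : R.piLower.obj F' ⟶ cokernel (kernel.ι ψ ≫ kernel.ι θ) :=
      Abelian.epiDesc ψ (kernel.ι θ ≫ cokernel.π (kernel.ι ψ ≫ kernel.ι θ)) hnc
    have hn : ψ ≫ n = kernel.ι θ ≫ cokernel.π (kernel.ι ψ ≫ kernel.ι θ) :=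
      Abelian.comp_epiDesc _ _ _
    have hnp : n ≫ p₂ = 0 := by
      rw [← cancel_epi ψ, comp_zero, ← Category.assoc, hn, Category.assoc, hgp]
      exact cokernel.condition _
    have hSfg : (ShortComplex.mk (kernel.ι ψ ≫ kernel.ι θ)
        (cokernel.π (kernel.ι ψ ≫ kernel.ι θ)) (cokernel.condition _)).Exact :=
      ShortComplex.exact_of_g_is_cokernel _ (cokernelIsCokernel _)
    have hSθ : (ShortComplex.mk (kernel.ι θ) (cokernel.π (kernel.ι θ))
        (cokernel.condition _)).Exact :=
      ShortComplex.exact_of_g_is_cokernel _ (cokernelIsCokernel _)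
    haveI hmono_n : Mono n := by
      apply Pseudoelement.mono_of_zero_of_map_zero
      intro a ha
      obtain ⟨m₁, hm₁⟩ := Pseudoelement.pseudo_surjective_of_epi ψ a
      have hg0 : (cokernel.π (kernel.ι ψ ≫ kernel.ι θ)) ((kernel.ι θ) m₁) = 0 := by
        rw [← Pseudoelement.comp_apply, ← hn, Pseudoelement.comp_apply, hm₁]
        exact ha
      obtain ⟨a', ha'⟩ := Pseudoelement.pseudo_exact_of_exact hSfg _ hg0
      have haa : (kernel.ι ψ) a' = m₁ := by
        apply Pseudoelement.pseudo_injective_of_mono (kernel.ι θ)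
        rw [← Pseudoelement.comp_apply]
        exact ha'
      rw [← hm₁, ← haa, ← Pseudoelement.comp_apply, kernel.condition]
      exact Pseudoelement.zero_apply _ _
    have hSnp : (ShortComplex.mk n p₂ hnp).Exact := by
      apply Pseudoelement.exact_of_pseudo_exact
      intro b hb
      obtain ⟨mm, hmm⟩ := Pseudoelement.pseudo_surjective_of_epi
        (cokernel.π (kernel.ι ψ ≫ kernel.ι θ)) b
      have hπ0 : (cokernel.π (kernel.ι θ)) mm = 0 := by
        have heq : cokernel.π (kernel.ι θ) = cokernel.π (kernel.ι ψ ≫ kernel.ι θ) ≫ p₂ :=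
          hgp.symm
        rw [heq, Pseudoelement.comp_apply, hmm]
        exact hb
      obtain ⟨m₁, hm₁⟩ := Pseudoelement.pseudo_exact_of_exact hSθ mm hπ0
      refine ⟨ψ m₁, ?_⟩
      rw [← Pseudoelement.comp_apply, hn, Pseudoelement.comp_apply, hm₁]
      exact hmm
    have hFV := mem_F_pjUpper R hY hX hV
    have hFF' := mem_F_piLower R hY hX hF'
    haveI : Mono (ShortComplex.mk n p₂ hnp).f := hmono_n
    have master : ∀ t : AD, (TY (R.piStar.obj t) ∧ TX (R.pjStar.obj t)) →
        ∀ h : t ⟶ cokernel (kernel.ι ψ ≫ kernel.ι θ), h = 0 := by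
      intro t ht h
      have h0 : h ≫ (p₂ ≫ Abelian.factorThruCoimage θ) = 0 := orth R hY hX ht hFV _
      have hp0 : h ≫ p₂ = 0 := by
        rw [← cancel_mono (Abelian.factorThruCoimage θ), zero_comp, Category.assoc]
        exact h0
      have hl := hSnp.lift_f h hp0
      have hl0 : hSnp.lift h hp0 = 0 := orth R hY hX ht hFF' _
      rw [← hl, hl0, zero_comp]
    constructor
    · apply f_of_orth hY
      intro G hG gmap
      have hg1 := master _ (mem_T_piLower R hY hX hG)
        ((R.adj_i₂.homEquiv G _).symm gmap)
      have e := (R.adj_i₂.homEquiv G _).apply_symm_apply gmap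
      rw [← e, hg1, homEquiv_zero]
    · apply f_of_orth hX
      intro Hx hH gmap
      have hg1 := master _ (mem_T_pjLower R hY hX hH)
        ((R.adj_j₁.homEquiv Hx _).symm gmap)
      have e := (R.adj_j₁.homEquiv Hx _).apply_symm_apply gmap
      rw [← e, hg1, homEquiv_zero]

end Big


open Glueing CategoryTheory Limits in
/-- Glueing of torsion pairs in a recollement of abelian categories: given torsion
pairs `(T_Y, F_Y)` in `A_Y` and `(T_X, F_X)` in `A_X`, the pair
`T = {A : ᵖi^*A ∈ T_Y, ᵖj^*A ∈ T_X}`, `F = {A : ᵖi^!A ∈ F_Y, ᵖj^*A ∈ F_X}` is a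
torsion pair in `A_D`, it is compatible with the recollement (`ᵖj_!ᵖj^*(T) ⊆ T`),
and its restrictions are exactly `(T_Y, F_Y)` and `(T_X, F_X)`. -/
theorem abRecollement_glued_torsionPair
    {AY AD AX : Type*} [Category AY] [Abelian AY] [Category AD] [Abelian AD]
    [Category AX] [Abelian AX]
    (R : Glueing.AbRecollement AY AD AX)
    {TY FY : AY → Prop} {TX FX : AX → Prop}
    (hY : AbTorsionPair TY FY) (hX : AbTorsionPair TX FX) :
    AbTorsionPair (fun A : AD => TY (R.piStar.obj A) ∧ TX (R.pjStar.obj A))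
      (fun A : AD => FY (R.piShriek.obj A) ∧ FX (R.pjStar.obj A)) ∧
    (∀ A : AD, (TY (R.piStar.obj A) ∧ TX (R.pjStar.obj A)) →
      (TY (R.piStar.obj (R.pjLower.obj (R.pjStar.obj A))) ∧
        TX (R.pjStar.obj (R.pjLower.obj (R.pjStar.obj A))))) ∧
    (∀ B : AY, TY B ↔ ∃ A : AD, (TY (R.piStar.obj A) ∧ TX (R.pjStar.obj A)) ∧
      Nonempty (R.piStar.obj A ≅ B)) ∧
    (∀ B : AY, FY B ↔ ∃ A : AD, (FY (R.piShriek.obj A) ∧ FX (R.pjStar.obj A)) ∧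
      Nonempty (R.piShriek.obj A ≅ B)) ∧
    (∀ B : AX, TX B ↔ ∃ A : AD, (TY (R.piStar.obj A) ∧ TX (R.pjStar.obj A)) ∧
      Nonempty (R.pjStar.obj A ≅ B)) ∧
    (∀ B : AX, FX B ↔ ∃ A : AD, (FY (R.piShriek.obj A) ∧ FX (R.pjStar.obj A)) ∧
      Nonempty (R.pjStar.obj A ≅ B)) := by
  haveI := R.piLower_full
  haveI := R.piLower_faithful
  haveI := R.unit_j₁_iso
  haveI := R.counit_j₂_iso
  refine ⟨?_, ?_, ?_, ?_, ?_, ?_⟩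
  · exact
      { isoClosed_t := fun e h => ⟨hY.isoClosed_t (R.piStar.mapIso e) h.1,
          hX.isoClosed_t (R.pjStar.mapIso e) h.2⟩
        isoClosed_f := fun e h => ⟨hY.isoClosed_f (R.piShriek.mapIso e) h.1,
          hX.isoClosed_f (R.pjStar.mapIso e) h.2⟩
        orthogonal := fun hA hB f => GluedAux.orth R hY hX hA hB f
        exists_ses := exists_ses_glued R hY hX }
  · intro A hA
    exact ⟨GluedAux.t_of_isZero hY (R.piStar_pjLower_zero _),
      hX.isoClosed_t (asIso (R.adj_j₁.unit.app (R.pjStar.obj A))) hA.2⟩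
  · intro B
    constructor
    · intro hB
      exact ⟨R.piLower.obj B, GluedAux.mem_T_piLower R hY hX hB,
        ⟨asIso (R.adj_i₁.counit.app B)⟩⟩
    · rintro ⟨A, hA, ⟨e⟩⟩
      exact hY.isoClosed_t e hA.1
  · intro B
    constructor
    · intro hB
      exact ⟨R.piLower.obj B, GluedAux.mem_F_piLower R hY hX hB,
        ⟨(asIso (R.adj_i₂.unit.app B)).symm⟩⟩
    · rintro ⟨A, hA, ⟨e⟩⟩
      exact hY.isoClosed_f e hA.1
  · intro B
    constructor
    · intro hB
      exact ⟨R.pjLower.obj B, GluedAux.mem_T_pjLower R hY hX hB,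
        ⟨(asIso (R.adj_j₁.unit.app B)).symm⟩⟩
    · rintro ⟨A, hA, ⟨e⟩⟩
      exact hX.isoClosed_t e hA.2
  · intro B
    constructor
    · intro hB
      exact ⟨R.pjUpper.obj B, GluedAux.mem_F_pjUpper R hY hX hB,
        ⟨asIso (R.adj_j₂.counit.app B)⟩⟩
    · rintro ⟨A, hA, ⟨e⟩⟩
      exact hX.isoClosed_f e hA.2
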